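/- Let (uₙ) be a sequence in L^∞(Q) bounded by M, converging to μ ∈ L^∞(Q × (0,1)) in the nonlinear weak-* sense: for every continuous g : [-M,M] → ℝ, g(uₙ) ⇀ ∫₀¹ g(μ(·,α)) dα weakly-* in L^∞(Q). If μ(t,x,α) is independent of α, i.e., μ(t,x,α) = u(t,x) for a.e. (t,x,α), then uₙ → u strongly in L^p(Q) for every p ∈ [1, ∞). -/

import Mathlib

open Filter Topology MeasureTheory

/-- If a uniformly bounded sequence `(uₙ) ⊂ L^∞(Q)` converges in the nonlinear weak-*
sense to a process function `μ(·,α)` (i.e. `g(uₙ) ⇀ ∫₀¹ g(μ(·,α)) dα` weak-* in `L^∞(Q)`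
for every continuous `g` on `[-M,M]`), and the limit `μ` is independent of `α`,
`μ(z,α) = u(z)`, then `uₙ → u` strongly in `L^p(Q)` for every `p ∈ [1,∞)`. -/
theorem nonlinear_weak_star_reduction_implies_strong_convergence
    {ℓ : ℕ} (Q : Set (ℝ × (Fin ℓ → ℝ))) (hQmeas : MeasurableSet Q)
    (hQfin : MeasureTheory.volume Q < ⊤)
    (M : ℝ) (hM : 0 < M)
    (un : ℕ → (ℝ × (Fin ℓ → ℝ)) → ℝ)
    (hmeas : ∀ n, AEMeasurable (un n) (MeasureTheory.volume.restrict Q))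
    (hbound : ∀ n, ∀ᵐ z ∂(MeasureTheory.volume.restrict Q), |un n z| ≤ M)
    (μ : (ℝ × (Fin ℓ → ℝ)) → ℝ → ℝ) (u : (ℝ × (Fin ℓ → ℝ)) → ℝ)
    (humeas : AEMeasurable u (MeasureTheory.volume.restrict Q))
    (hweak : ∀ g : ℝ → ℝ, ContinuousOn g (Set.Icc (-M) M) →
      ∀ ψ : (ℝ × (Fin ℓ → ℝ)) → ℝ, IntegrableOn ψ Q →
        Tendsto (fun n => ∫ z in Q, g (un n z) * ψ z) atTop
          (𝓝 (∫ z in Q, (∫ α in (0:ℝ)..1, g (μ z α)) * ψ z)))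
    (hindep : ∀ᵐ z ∂(MeasureTheory.volume.restrict Q),
      ∀ α ∈ Set.Ioo (0:ℝ) 1, μ z α = u z) :
    ∀ p : ℝ, 1 ≤ p →
      Tendsto (fun n => ∫ z in Q, |un n z - u z| ^ p) atTop (𝓝 0) := by
  intro p hp
  set ν := MeasureTheory.volume.restrict Q with hνdef
  haveI : IsFiniteMeasure ν := ⟨by rw [Measure.restrict_apply_univ]; exact hQfin⟩
  -- Step 0: the key (linear-in-ψ) convergence with limit expressed through u
  have hkey : ∀ g : ℝ → ℝ, ContinuousOn g (Set.Icc (-M) M) →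
      ∀ ψ : (ℝ × (Fin ℓ → ℝ)) → ℝ, IntegrableOn ψ Q →
      Tendsto (fun n => ∫ z in Q, g (un n z) * ψ z) atTop
        (𝓝 (∫ z in Q, g (u z) * ψ z)) := by
    intro g hg ψ hψ
    have h1 : ∀ᵐ α : ℝ, α ≠ 1 := by
      have : (volume : Measure ℝ) {(1:ℝ)} = 0 := measure_singleton 1
      filter_upwards [compl_mem_ae_iff.2 this] with α hα
      simpa using hα
    have hmu : ∀ᵐ z ∂ν, (∫ α in (0:ℝ)..1, g (μ z α)) = g (u z) := by
      filter_upwards [hindep] with z hz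
      have : ∫ α in (0:ℝ)..1, g (μ z α) = ∫ α in (0:ℝ)..1, g (u z) := by
        apply intervalIntegral.integral_congr_ae
        filter_upwards [h1] with α hα hαmem
        rw [Set.uIoc_of_le (by norm_num : (0:ℝ) ≤ 1)] at hαmem
        exact congrArg g (hz α ⟨hαmem.1, lt_of_le_of_ne hαmem.2 hα⟩)
      rw [this, intervalIntegral.integral_const]
      simp
    have h2 := hweak g hg ψ hψ
    rwa [integral_congr_ae
      (by filter_upwards [hmu] with z hz; rw [hz] :
        (fun z => (∫ α in (0:ℝ)..1, g (μ z α)) * ψ z) =ᵐ[ν] fun z => g (u z) * ψ z)] at h2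
  -- Step 1: |u| ≤ M a.e.
  obtain ⟨f, hf_meas, hf_eq⟩ := humeas
  have hbu : ∀ᵐ z ∂ν, |u z| ≤ M := by
    -- generic vanishing lemma
    have core : ∀ (c : ℝ), |c| = 1 → ∀ (k : ℕ) (S : Set (ℝ × (Fin ℓ → ℝ))),
        MeasurableSet S → (∀ z ∈ S, M < c * f z ∧ |f z| ≤ k) → ν S = 0 := by
      intro c hc k S hS hSf
      set ψ : (ℝ × (Fin ℓ → ℝ)) → ℝ := S.indicator (fun _ => c) with hψdef
      have hψint : IntegrableOn ψ Q := (integrable_const c).indicator hS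
      have hlim := hkey id continuous_id.continuousOn ψ hψint
      simp only [id_eq] at hlim
      -- uniform bound on each term
      have hterm : ∀ n, |∫ z in Q, un n z * ψ z| ≤ M * (ν S).toReal := by
        intro n
        have hint : Integrable (fun z => un n z * ψ z) ν := by
          apply Integrable.bdd_mul (hψint) (hmeas n).aestronglyMeasurable
          filter_upwards [hbound n] with z hz
          simpa using hz
        calc |∫ z in Q, un n z * ψ z| ≤ ∫ z in Q, |un n z * ψ z| := by
              simpa only [Real.norm_eq_abs] using
                norm_integral_le_integral_norm (μ := ν) (fun z => un n z * ψ z)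
          _ ≤ ∫ z in Q, M * S.indicator (fun _ => 1) z := by
              apply integral_mono_ae hint.abs
              · exact (integrable_const (1:ℝ)).indicator hS |>.const_mul M
              · filter_upwards [hbound n] with z hz
                rw [abs_mul]
                by_cases hzS : z ∈ S
                · simp only [hψdef, Set.indicator_of_mem hzS]
                  rw [hc]
                  simpa [hzS] using hz
                · simp [hψdef, Set.indicator_of_notMem hzS]
          _ = M * (ν S).toReal := by
              rw [integral_const_mul, integral_indicator_const _ hS]
              simp [mul_comm, measureReal_def, hνdef]
      -- the limit equals ∫_S u·c
      have hLval : (∫ z in Q, u z * ψ z) = ∫ z in S, c * f z ∂ν := by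
        have : (fun z => u z * ψ z) =ᵐ[ν] fun z => S.indicator (fun w => c * f w) z := by
          filter_upwards [hf_eq] with z hz
          by_cases hzS : z ∈ S
          · simp [hψdef, Set.indicator_of_mem hzS, hz, mul_comm]
          · simp [hψdef, Set.indicator_of_notMem hzS]
        rw [integral_congr_ae this, integral_indicator hS]
      have hLbound : |∫ z in S, c * f z ∂ν| ≤ M * (ν S).toReal := by
        rw [← hLval]
        exact le_of_tendsto hlim.abs (Filter.Eventually.of_forall hterm)
      -- but c * f > M on S
      have hcfint : Integrable (fun z => c * f z) (ν.restrict S) := by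
        apply Integrable.mono' (integrable_const ((k:ℝ)) : Integrable _ (ν.restrict S))
        · exact ((hf_meas.const_mul c).aestronglyMeasurable).restrict
        · filter_upwards [ae_restrict_mem hS] with z hz
          rw [norm_mul, Real.norm_eq_abs, Real.norm_eq_abs, hc, one_mul]
          exact (hSf z hz).2
      have hfint : Integrable (fun z => c * f z - M) (ν.restrict S) :=
        hcfint.sub (integrable_const M)
      have hzero : ∫ z in S, (c * f z - M) ∂ν = 0 := by
        have h1 : ∫ z in S, (c * f z - M) ∂ν ≤ 0 := by
          rw [integral_sub hcfint (integrable_const M)]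
          have : ∫ z in S, c * f z ∂ν ≤ M * (ν S).toReal :=
            le_trans (le_abs_self _) hLbound
          simp only [integral_const, measureReal_restrict_apply_univ, measureReal_def, smul_eq_mul]
          have hr : (ν.restrict S) Set.univ = ν S := Measure.restrict_apply_univ S
          rw [hr]
          linarith [this]
        have h2 : 0 ≤ ∫ z in S, (c * f z - M) ∂ν := by
          apply integral_nonneg_of_ae
          filter_upwards [ae_restrict_mem hS] with z hz
          simp only [Pi.zero_apply]
          linarith [(hSf z hz).1]
        linarith
      have hae0 : ∀ᵐ z ∂ν.restrict S, c * f z - M = 0 :=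
        (integral_eq_zero_iff_of_nonneg_ae (by
          filter_upwards [ae_restrict_mem hS] with z hz
          simp only [Pi.zero_apply]
          linarith [(hSf z hz).1]) hfint).mp hzero
      have hfalse : ∀ᵐ z ∂ν.restrict S, False := by
        filter_upwards [hae0, ae_restrict_mem hS] with z h0 hz
        linarith [(hSf z hz).1]
      have : ν.restrict S Set.univ = 0 := by
        simpa [ae_iff] using hfalse
      rwa [Measure.restrict_apply_univ] at this
    -- sets where |f| > M
    have hposk : ∀ k : ℕ, ν {z | M < f z ∧ |f z| ≤ (k:ℝ)} = 0 := by
      intro k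
      apply core 1 (by norm_num) k
      · exact (measurableSet_lt measurable_const hf_meas).inter
          (measurableSet_le hf_meas.abs measurable_const)
      · intro z hz
        exact ⟨by simpa using hz.1, hz.2⟩
    have hnegk : ∀ k : ℕ, ν {z | M < -f z ∧ |f z| ≤ (k:ℝ)} = 0 := by
      intro k
      apply core (-1) (by norm_num) k
      · exact (measurableSet_lt measurable_const hf_meas.neg).inter
          (measurableSet_le hf_meas.abs measurable_const)
      · intro z hz
        refine ⟨by simpa [neg_mul] using hz.1, hz.2⟩
    have hbig : ν {z | M < |f z|} = 0 := by
      have hsub : {z | M < |f z|} ⊆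
          (⋃ k : ℕ, {z | M < f z ∧ |f z| ≤ (k:ℝ)}) ∪
          (⋃ k : ℕ, {z | M < -f z ∧ |f z| ≤ (k:ℝ)}) := by
        intro z hz
        rcases le_or_gt 0 (f z) with h0 | h0
        · left
          refine Set.mem_iUnion.2 ⟨⌈|f z|⌉₊, ?_, Nat.le_ceil _⟩
          have : |f z| = f z := abs_of_nonneg h0
          rw [← this]; exact hz
        · right
          refine Set.mem_iUnion.2 ⟨⌈|f z|⌉₊, ?_, Nat.le_ceil _⟩
          have : |f z| = -f z := abs_of_neg h0
          rw [← this]; exact hz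
      refine measure_mono_null hsub ?_
      rw [measure_union_null_iff]
      exact ⟨measure_iUnion_null hposk, measure_iUnion_null hnegk⟩
    have : ∀ᵐ z ∂ν, ¬ (M < |f z|) := by
      rw [ae_iff]
      simpa using hbig
    filter_upwards [this, hf_eq] with z hz hz2
    rw [hz2]
    exact not_lt.mp hz
  -- integrability facts
  have humeas' : AEMeasurable u ν := ⟨f, hf_meas, hf_eq⟩
  have hu_int : Integrable u ν := by
    apply Integrable.mono' (integrable_const M) humeas'.aestronglyMeasurable
    filter_upwards [hbu] with z hz
    simpa using hz
  -- Step 2: L² convergence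
  have hA : Tendsto (fun n => ∫ z in Q, (un n z)^2) atTop
      (𝓝 (∫ z in Q, (u z)^2)) := by
    simpa using hkey (fun x => x^2) (continuous_pow 2).continuousOn
      (fun _ => 1) (integrable_const 1)
  have hB : Tendsto (fun n => ∫ z in Q, un n z * u z) atTop
      (𝓝 (∫ z in Q, u z * u z)) := by
    simpa using hkey id continuous_id.continuousOn u hu_int
  have hsq_int : ∀ n, Integrable (fun z => (un n z)^2) ν := by
    intro n
    apply Integrable.mono' (integrable_const (M^2))
      ((hmeas n).pow_const 2).aestronglyMeasurable
    filter_upwards [hbound n] with z hz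
    rw [Real.norm_eq_abs, abs_pow]
    exact pow_le_pow_left₀ (abs_nonneg _) hz 2
  have husq_int : Integrable (fun z => (u z)^2) ν := by
    apply Integrable.mono' (integrable_const (M^2))
      (humeas'.pow_const 2).aestronglyMeasurable
    filter_upwards [hbu] with z hz
    rw [Real.norm_eq_abs, abs_pow]
    exact pow_le_pow_left₀ (abs_nonneg _) hz 2
  have hmul_int : ∀ n, Integrable (fun z => un n z * u z) ν := fun n =>
    Integrable.bdd_mul hu_int (hmeas n).aestronglyMeasurable
      (by filter_upwards [hbound n] with z hz; simpa using hz)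
  have huu : (∫ z in Q, u z * u z) = ∫ z in Q, (u z)^2 :=
    integral_congr_ae (Filter.Eventually.of_forall fun z => (sq (u z)).symm)
  have heq : ∀ n, (∫ z in Q, (un n z - u z)^2)
      = (∫ z in Q, (un n z)^2) - 2 * (∫ z in Q, un n z * u z)
        + (∫ z in Q, (u z)^2) := by
    intro n
    have e1 : (∫ z in Q, (un n z - u z)^2)
        = ∫ z in Q, ((un n z)^2 - 2 * (un n z * u z) + (u z)^2) :=
      integral_congr_ae (Filter.Eventually.of_forall fun z => by ring)
    have hsub : Integrable (fun z => (un n z)^2 - 2 * (un n z * u z)) ν :=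
      (hsq_int n).sub ((hmul_int n).const_mul 2)
    rw [e1, integral_add hsub husq_int,
      integral_sub (hsq_int n) ((hmul_int n).const_mul 2), integral_const_mul]
  have hJ : Tendsto (fun n => ∫ z in Q, (un n z - u z)^2) atTop (𝓝 0) := by
    have hcomb := (hA.sub (hB.const_mul 2)).add
      (tendsto_const_nhds (x := ∫ z in Q, (u z)^2) (f := atTop))
    rw [show (∫ z in Q, (u z)^2) - 2 * (∫ z in Q, u z * u z)
        + (∫ z in Q, (u z)^2) = 0 from by rw [huu]; ring] at hcomb
    exact hcomb.congr fun n => (heq n).symm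
  -- Step 3: L^p convergence
  have hp0 : (0:ℝ) ≤ p := le_trans zero_le_one hp
  set V := (MeasureTheory.volume Q).toReal with hVdef
  have hVnn : 0 ≤ V := ENNReal.toReal_nonneg
  refine Metric.tendsto_nhds.mpr fun ε hε => ?_
  set δ := min 1 (ε / (2 * (V + 1))) with hδdef
  have hδpos : 0 < δ := lt_min one_pos (div_pos hε (by positivity))
  have hδ1 : δ ≤ 1 := min_le_left _ _
  set C := (2*M)^p / δ^2 with hCdef
  have hCpos : 0 < C := by positivity
  have hCJ : ∀ᶠ n in atTop, C * (∫ z in Q, (un n z - u z)^2) < ε/2 := by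
    have h := hJ.const_mul C
    rw [mul_zero] at h
    exact h.eventually_lt_const (half_pos hε)
  filter_upwards [hCJ] with n hn
  have hd_meas : AEMeasurable (fun z => un n z - u z) ν := (hmeas n).sub humeas'
  have hdb : ∀ᵐ z ∂ν, |un n z - u z| ≤ 2*M := by
    filter_upwards [hbound n, hbu] with z h1 h2
    calc |un n z - u z| ≤ |un n z| + |u z| := abs_sub _ _
      _ ≤ 2*M := by linarith
  have hdsq_int : Integrable (fun z => (un n z - u z)^2) ν := by
    apply Integrable.mono' (integrable_const ((2*M)^2))
      (hd_meas.pow_const 2).aestronglyMeasurable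
    filter_upwards [hdb] with z hz
    rw [Real.norm_eq_abs, abs_pow]
    exact pow_le_pow_left₀ (abs_nonneg _) hz 2
  have hint_p : Integrable (fun z => |un n z - u z| ^ p) ν := by
    apply Integrable.mono' (integrable_const ((2*M)^p))
      (((Real.continuous_rpow_const hp0).comp continuous_abs).measurable.comp_aemeasurable hd_meas).aestronglyMeasurable
    filter_upwards [hdb] with z hz
    rw [Real.norm_eq_abs]
    exact le_trans (Real.abs_rpow_le_abs_rpow _ _)
      (by rw [abs_abs]; exact Real.rpow_le_rpow (abs_nonneg _) hz hp0)
  have hle : (∫ z in Q, |un n z - u z| ^ p)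
      ≤ δ^p * V + C * (∫ z in Q, (un n z - u z)^2) := by
    calc (∫ z in Q, |un n z - u z| ^ p)
        ≤ ∫ z in Q, (δ^p + C * (un n z - u z)^2) := by
          apply integral_mono_ae hint_p
            ((integrable_const _).add (hdsq_int.const_mul C))
          filter_upwards [hdb] with z hz
          simp only [Pi.add_apply]
          rcases le_or_gt (|un n z - u z|) δ with h | h
          · have h1 : |un n z - u z|^p ≤ δ^p :=
              Real.rpow_le_rpow (abs_nonneg _) h hp0
            have h2 : 0 ≤ C * (un n z - u z)^2 :=
              mul_nonneg hCpos.le (sq_nonneg _)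
            linarith
          · have hb1 : |un n z - u z|^p ≤ (2*M)^p :=
              Real.rpow_le_rpow (abs_nonneg _) hz hp0
            have hδ2 : δ^2 ≤ (un n z - u z)^2 := by
              calc δ^2 ≤ |un n z - u z|^2 := pow_le_pow_left₀ hδpos.le h.le 2
                _ = (un n z - u z)^2 := sq_abs _
            have h3 : C * δ^2 ≤ C * (un n z - u z)^2 :=
              mul_le_mul_of_nonneg_left hδ2 hCpos.le
            have h4 : C * δ^2 = (2*M)^p := by
              rw [hCdef]
              field_simp
            have hδp : 0 ≤ δ^p := Real.rpow_nonneg hδpos.le p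
            linarith
      _ = δ^p * V + C * (∫ z in Q, (un n z - u z)^2) := by
          rw [integral_add (integrable_const _) (hdsq_int.const_mul C),
            integral_const, integral_const_mul]
          rw [measureReal_restrict_apply_univ, measureReal_def]
          simp [smul_eq_mul, mul_comm]
          rfl
  have hδpV : δ^p * V ≤ ε/2 := by
    have h1 : δ^p ≤ δ := by
      calc δ^p ≤ δ^(1:ℝ) := Real.rpow_le_rpow_of_exponent_ge hδpos hδ1 hp
        _ = δ := Real.rpow_one δ
    calc δ^p * V ≤ δ * V := mul_le_mul_of_nonneg_right h1 hVnn
      _ ≤ (ε / (2*(V+1))) * V := mul_le_mul_of_nonneg_right (min_le_right _ _) hVnn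
      _ ≤ ε/2 := by
          rw [div_mul_eq_mul_div, div_le_div_iff₀ (by positivity) (by norm_num)]
          nlinarith
  have hnn : 0 ≤ ∫ z in Q, |un n z - u z| ^ p :=
    integral_nonneg fun z => Real.rpow_nonneg (abs_nonneg _) _
  rw [Real.dist_eq, sub_zero, abs_of_nonneg hnn]
  linarith
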